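/- Galois-equivariant functions on a finite continuous Galois set form an étale algebra of the expected dimension: let F be a field, S a separable closure of F, and Γ = Gal(S/F) its group of F-algebra automorphisms, endowed with the Krull topology. Let A be a finite set with an action of Γ such that the stabilizer of every point is an open subgroup of Γ. Then the set E of Γ-equivariant functions u : A → S (those with u(γ · a) = γ(u(a)) for all γ ∈ Γ, a ∈ A) is an F-subalgebra of the algebra of all functions A → S with pointwise operations, and E is finite-dimensional over F with dim_F E equal to the cardinality of A. -/

import Mathlib

set_option maxHeartbeats 1000000
set_option synthInstance.maxHeartbeats 400000

open IntermediateField Module MulAction Polynomial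

section Helpers

lemma memFixedFieldIff {K L : Type*} [Field K] [Field L] [Algebra K L]
    {H : Subgroup (L ≃ₐ[K] L)} {x : L} :
    x ∈ IntermediateField.fixedField H ↔ ∀ σ ∈ H, σ x = x := by
  constructor
  · intro h σ hσ
    exact h ⟨σ, hσ⟩
  · intro h σ
    exact h σ σ.2

lemma fixedField_antitone' {K L : Type*} [Field K] [Field L] [Algebra K L]
    {H₁ H₂ : Subgroup (L ≃ₐ[K] L)} (h : H₁ ≤ H₂) :
    IntermediateField.fixedField H₂ ≤ IntermediateField.fixedField H₁ := by
  intro x hx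
  rw [memFixedFieldIff] at hx ⊢
  exact fun σ hσ => hx σ (h hσ)

variable {F S : Type} [Field F] [Field S] [Algebra F S] [IsSepClosure F S]

lemma fixedField_fixingSubgroup_le (M : IntermediateField F S) :
    IntermediateField.fixedField M.fixingSubgroup ≤ M := by
  haveI : IsSepClosed S := IsSepClosure.sep_closed F
  haveI : Algebra.IsSeparable M S := Algebra.isSeparable_tower_top_of_isSeparable F M S
  haveI : IsSepClosure M S := ⟨‹_›, ‹_›⟩
  classical
  intro x hx
  by_contra hxM
  have hint : IsIntegral M x := (IsGalois.to_normal (F := M) (E := S)).isIntegral x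
  have hsep : (minpoly M x).Separable := Algebra.IsSeparable.isSeparable M x
  have hsplits : Splits ((minpoly M x).map (algebraMap M S)) :=
    (IsGalois.to_normal (F := M) (E := S)).splits x
  -- degree ≥ 2
  have hdeg : 2 ≤ (minpoly M x).natDegree := by
    refine (minpoly.two_le_natDegree_iff hint).2 ?_
    rintro ⟨m, rfl⟩
    exact hxM m.2
  -- find another root
  set p := (minpoly M x).map (algebraMap M S) with hp
  have hpne : p ≠ 0 := Polynomial.map_ne_zero (minpoly.ne_zero hint)
  have hxroot : x ∈ p.roots := by
    rw [Polynomial.mem_roots hpne, Polynomial.IsRoot, hp, Polynomial.eval_map,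
      ← Polynomial.aeval_def]
    exact minpoly.aeval M x
  have hcard : 2 ≤ Multiset.card p.roots := by
    have := hsplits.natDegree_eq_card_roots
    have h' : p.natDegree = (minpoly M x).natDegree := Polynomial.natDegree_map _
    omega
  have hnodup : p.roots.Nodup := Polynomial.nodup_roots (hsep.map)
  obtain ⟨y, hy, hyx⟩ : ∃ y ∈ p.roots, y ≠ x := by
    have h2 : Multiset.card (p.roots.erase x) = Multiset.card p.roots - 1 :=
      Multiset.card_erase_of_mem hxroot
    have h3 : 0 < Multiset.card (p.roots.erase x) := by omega
    obtain ⟨y, hy⟩ := Multiset.card_pos_iff_exists_mem.1 h3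
    have := (Multiset.Nodup.mem_erase_iff hnodup).1 hy
    exact ⟨y, this.2, this.1⟩
  have hyroot : (Polynomial.aeval y) (minpoly M x) = 0 := by
    have := (Polynomial.mem_roots hpne).1 hy
    rwa [Polynomial.IsRoot, Polynomial.eval_map, ← Polynomial.aeval_def] at this
  obtain ⟨σ, hσ⟩ := minpoly.exists_algEquiv_of_root (K := M) (L := S) hint.isAlgebraic hyroot
  -- σ y = x ... we want one moving x: use the other version
  obtain ⟨τ, hτ⟩ := minpoly.exists_algEquiv_of_root' (K := M) (L := S) hint.isAlgebraic hyroot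
  -- τ x = y
  have hτmem : (τ.restrictScalars F : S ≃ₐ[F] S) ∈ M.fixingSubgroup := by
    rw [IntermediateField.mem_fixingSubgroup_iff]
    intro z hz
    exact τ.commutes ⟨z, hz⟩
  have := (memFixedFieldIff.1 hx) _ hτmem
  rw [show (τ.restrictScalars F : S ≃ₐ[F] S) x = τ x from rfl, hτ] at this
  exact hyx this

/-- The key dimension computation for fixed fields of open subgroups. -/
lemma openSubgroup_fixedField (H : Subgroup (S ≃ₐ[F] S))
    (hH : IsOpen (H : Set (S ≃ₐ[F] S))) :
    FiniteDimensional F ↥(IntermediateField.fixedField H) ∧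
      Module.finrank F ↥(IntermediateField.fixedField H) = H.index := by
  classical
  have h1 : (H : Set (S ≃ₐ[F] S)) ∈ nhds (1 : S ≃ₐ[F] S) := hH.mem_nhds H.one_mem
  rw [krullTopology_mem_nhds_one_iff] at h1
  obtain ⟨M₀, hfin, hM₀⟩ := h1
  haveI : FiniteDimensional F M₀ := hfin
  obtain ⟨M, hMfin, hMnormal, hNH⟩ :
      ∃ M : IntermediateField F S, FiniteDimensional F M ∧ Normal F M ∧
        M.fixingSubgroup ≤ H := by
    refine ⟨normalClosure F M₀ S, inferInstance, inferInstance, fun σ hσ => ?_⟩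
    exact hM₀ (IntermediateField.fixingSubgroup_antitone M₀.le_normalClosure hσ)
  haveI : FiniteDimensional F M := hMfin
  haveI : Normal F M := hMnormal
  haveI : IsGalois F M :=
    { to_isSeparable := Algebra.isSeparable_tower_bot_of_isSeparable F M S
      to_normal := hMnormal }
  set π : (S ≃ₐ[F] S) →* (M ≃ₐ[F] M) := AlgEquiv.restrictNormalHom M with hπ
  have hsurj : Function.Surjective π := AlgEquiv.restrictNormalHom_surjective (K₁ := M) S
  have hker : π.ker = M.fixingSubgroup := IntermediateField.restrictNormalHom_ker M
  set H' : Subgroup (M ≃ₐ[F] M) := H.map π with hH'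
  -- fixed field of H is contained in M
  have hKM : IntermediateField.fixedField H ≤ M :=
    le_trans (fixedField_antitone' hNH) (fixedField_fixingSubgroup_le M)
  -- commutation: for x ∈ M and σ : S ≃ₐ[F] S, ↑(π σ ⟨x,_⟩) = σ x
  have hcomm : ∀ (σ : S ≃ₐ[F] S) (x : M), ((π σ x : M) : S) = σ (x : S) := by
    intro σ x
    exact AlgEquiv.restrictNormalHom_apply M σ x
  -- fixedField H = (fixedField H').map M.val
  have hKmap : IntermediateField.fixedField H =
      IntermediateField.lift (IntermediateField.fixedField H') := by
    apply le_antisymm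
    · intro x hx
      have hxM : x ∈ M := hKM hx
      have hmem : (⟨x, hxM⟩ : M) ∈ IntermediateField.fixedField H' := by
        rw [memFixedFieldIff]
        rintro τ ⟨σ, hσ, rfl⟩
        apply Subtype.ext
        rw [hcomm σ ⟨x, hxM⟩]
        exact (memFixedFieldIff.1 hx) σ hσ
      exact ⟨⟨x, hxM⟩, hmem, rfl⟩
    · rintro x ⟨y, hy, rfl⟩
      rw [memFixedFieldIff]
      intro σ hσ
      have hmem : π σ ∈ H' := ⟨σ, hσ, rfl⟩
      have hfix : π σ y = y := (memFixedFieldIff.1 hy) (π σ) hmem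
      calc σ (M.val y) = ((π σ y : M) : S) := (hcomm σ y).symm
        _ = M.val y := congrArg Subtype.val hfix
  haveI hfd' : FiniteDimensional F ↥(IntermediateField.fixedField H') := inferInstance
  haveI hfd : FiniteDimensional F ↥(IntermediateField.fixedField H) := by
    rw [hKmap]
    exact Module.Finite.equiv
      (IntermediateField.liftAlgEquiv (IntermediateField.fixedField H')).toLinearEquiv
  refine ⟨hfd, ?_⟩
  have hre : Module.finrank F ↥(IntermediateField.fixedField H) =
      Module.finrank F ↥(IntermediateField.fixedField H') := by
    rw [hKmap]
    exact ((IntermediateField.liftAlgEquiv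
      (IntermediateField.fixedField H')).toLinearEquiv.finrank_eq).symm
  -- finite Galois theory in M
  have h2 : Module.finrank ↥(IntermediateField.fixedField H') ↥M = Nat.card H' := by
    rw [IntermediateField.finrank_fixedField_eq_card, Nat.card_eq_fintype_card]
  have h3 : Module.finrank F M = Nat.card (M ≃ₐ[F] M) := by
    rw [IsGalois.card_aut_eq_finrank]
  have h4 : Module.finrank F ↥(IntermediateField.fixedField H') *
      Module.finrank ↥(IntermediateField.fixedField H') ↥M = Module.finrank F M :=
    Module.finrank_mul_finrank F ↥(IntermediateField.fixedField H') ↥M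
  have h5 : H'.index * Nat.card H' = Nat.card (M ≃ₐ[F] M) := H'.index_mul_card
  have h6 : H'.index = H.index := Subgroup.index_map_eq H hsurj (hker.symm ▸ hNH)
  have hpos : 0 < Nat.card H' := Nat.card_pos
  rw [hre, ← h6]
  have hmain : Module.finrank F ↥(IntermediateField.fixedField H') * Nat.card H' =
      H'.index * Nat.card H' := by
    calc Module.finrank F ↥(IntermediateField.fixedField H') * Nat.card H'
        = Module.finrank F ↥(IntermediateField.fixedField H') *
          Module.finrank ↥(IntermediateField.fixedField H') ↥M := by rw [h2]
      _ = Module.finrank F ↥M := h4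
      _ = Nat.card (M ≃ₐ[F] M) := h3
      _ = H'.index * Nat.card H' := h5.symm
  
  exact Nat.eq_of_mul_eq_mul_right hpos hmain

end Helpers

/-- Galois-equivariant functions on a finite continuous Galois set form an étale algebra
of the expected dimension: if `S` is a separable closure of `F`, `Γ = Gal(S/F)` with the
Krull topology, and `A` is a finite `Γ`-set all of whose point stabilizers are open, then
the `Γ`-equivariant functions `u : A → S` form an `F`-subalgebra `E` of the algebra of
all functions `A → S` (with pointwise operations), which is finite-dimensional over `F`
of dimension the cardinality of `A`. -/
theorem equivariant_functions_form_etale_algebra (F S : Type) [Field F] [Field S]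
    [Algebra F S] [IsSepClosure F S]
    (A : Type) [Finite A] [MulAction (S ≃ₐ[F] S) A]
    (hopen : ∀ a : A, IsOpen ((MulAction.stabilizer (S ≃ₐ[F] S) a) : Set (S ≃ₐ[F] S))) :
    ∃ E : Subalgebra F (A → S),
      (E : Set (A → S)) = {u : A → S | ∀ (γ : S ≃ₐ[F] S) (a : A), u (γ • a) = γ (u a)} ∧
      FiniteDimensional F E ∧
      Module.finrank F E = Nat.card A := by
  classical
  let E : Subalgebra F (A → S) :=
    { carrier := {u : A → S | ∀ (γ : S ≃ₐ[F] S) (a : A), u (γ • a) = γ (u a)}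
      mul_mem' := by
        intro u v hu hv γ a
        simp only [Pi.mul_apply, hu γ a, hv γ a, map_mul]
      add_mem' := by
        intro u v hu hv γ a
        simp only [Pi.add_apply, hu γ a, hv γ a, map_add]
      algebraMap_mem' := by
        intro r γ a
        simp only [Pi.algebraMap_apply]
        exact (γ.commutes r).symm }
  let Q := Quotient (MulAction.orbitRel (S ≃ₐ[F] S) A)
  haveI : Finite Q := Quotient.finite _
  haveI : Fintype Q := Fintype.ofFinite Q
  let K : Q → IntermediateField F S := fun q =>
    IntermediateField.fixedField (MulAction.stabilizer (S ≃ₐ[F] S) q.out)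
  have hKfd : ∀ q : Q, FiniteDimensional F ↥(K q) := fun q =>
    (openSubgroup_fixedField _ (hopen q.out)).1
  have hKrank : ∀ q : Q, Module.finrank F ↥(K q) =
      (MulAction.stabilizer (S ≃ₐ[F] S) q.out).index := fun q =>
    (openSubgroup_fixedField _ (hopen q.out)).2
  haveI : ∀ q : Q, FiniteDimensional F ↥(K q) := hKfd
  -- transporting elements
  have hrep : ∀ a : A, ∃ γ : S ≃ₐ[F] S,
      γ • (Quotient.mk (MulAction.orbitRel (S ≃ₐ[F] S) A) a).out = a := by
    intro a
    have h := Quotient.mk_out (s := MulAction.orbitRel (S ≃ₐ[F] S) A) a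
    rw [MulAction.orbitRel_apply, MulAction.mem_orbit_iff] at h
    obtain ⟨γ, hγ⟩ := h
    exact ⟨γ⁻¹, by rw [← hγ, inv_smul_smul]⟩
  choose g hg using hrep
  have hqsmul : ∀ (γ : S ≃ₐ[F] S) (a : A),
      Quotient.mk (MulAction.orbitRel (S ≃ₐ[F] S) A) (γ • a) =
        Quotient.mk (MulAction.orbitRel (S ≃ₐ[F] S) A) a := fun γ a =>
    Quotient.sound (MulAction.orbitRel_apply.2 (MulAction.mem_orbit a γ))
  -- the comparison map
  have hval : ∀ (u : E) (q : Q), ((u : A → S) q.out) ∈ K q := by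
    intro u q
    rw [memFixedFieldIff]
    intro σ hσ
    have h := u.2 σ q.out
    rw [MulAction.mem_stabilizer_iff.1 hσ] at h
    exact h.symm
  let Φ : E →ₗ[F] (∀ q : Q, K q) :=
    { toFun := fun u q => ⟨(u : A → S) q.out, hval u q⟩
      map_add' := fun u v => funext fun q => Subtype.ext rfl
      map_smul' := fun c u => funext fun q => Subtype.ext rfl }
  have hΦinj : Function.Injective Φ := by
    intro u v huv
    apply Subtype.ext
    funext a
    have hq : ∀ q : Q, (u : A → S) q.out = (v : A → S) q.out := fun q =>
      congrArg Subtype.val (congrFun huv q)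
    have h1 := u.2 (g a) (Quotient.mk (MulAction.orbitRel (S ≃ₐ[F] S) A) a).out
    have h2 := v.2 (g a) (Quotient.mk (MulAction.orbitRel (S ≃ₐ[F] S) A) a).out
    rw [hg a] at h1 h2
    rw [h1, h2, hq]
  have hΦsurj : Function.Surjective Φ := by
    intro s
    set u : A → S := fun a =>
      g a ((s (Quotient.mk (MulAction.orbitRel (S ≃ₐ[F] S) A) a) : S)) with hu
    have huE : u ∈ E := by
      intro γ a
      show g (γ • a) ((s (Quotient.mk (MulAction.orbitRel (S ≃ₐ[F] S) A) (γ • a)) : S)) =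
        γ (g a ((s (Quotient.mk (MulAction.orbitRel (S ≃ₐ[F] S) A) a) : S)))
      rw [hqsmul γ a]
      set q := Quotient.mk (MulAction.orbitRel (S ≃ₐ[F] S) A) a with hq
      set x : S := (s q : S) with hx
      have hδ : (g (γ • a))⁻¹ * (γ * g a) ∈ MulAction.stabilizer (S ≃ₐ[F] S) q.out := by
        rw [MulAction.mem_stabilizer_iff]
        have h1 : g (γ • a) • q.out = γ • a := by
          have h2 := hg (γ • a)
          rwa [hqsmul γ a, ← hq] at h2
        rw [mul_smul, mul_smul, hg a, inv_smul_eq_iff, h1]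
      have hfix : ((g (γ • a))⁻¹ * (γ * g a)) x = x :=
        (memFixedFieldIff.1 (s q).2) _ hδ
      have h3 : γ (g a x) = g (γ • a) x := by
        have h4 := congrArg (g (γ • a)) hfix
        rwa [← AlgEquiv.mul_apply, ← mul_assoc, mul_inv_cancel, one_mul,
          AlgEquiv.mul_apply] at h4
      exact h3.symm
    refine ⟨⟨u, huE⟩, funext fun q => Subtype.ext ?_⟩
    show g q.out ((s (Quotient.mk (MulAction.orbitRel (S ≃ₐ[F] S) A) q.out) : S)) = (s q : S)
    have hout : Quotient.mk (MulAction.orbitRel (S ≃ₐ[F] S) A) q.out = q := Quotient.out_eq q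
    rw [hout]
    have hstab : g q.out ∈ MulAction.stabilizer (S ≃ₐ[F] S) q.out := by
      rw [MulAction.mem_stabilizer_iff]
      have h1 := hg q.out
      rwa [hout] at h1
    exact (memFixedFieldIff.1 (s q).2) _ hstab
  let e : E ≃ₗ[F] (∀ q : Q, K q) := LinearEquiv.ofBijective Φ ⟨hΦinj, hΦsurj⟩
  haveI hEfd : FiniteDimensional F E := Module.Finite.equiv e.symm
  refine ⟨E, rfl, hEfd, ?_⟩
  rw [e.finrank_eq, Module.finrank_pi_fintype]
  -- counting
  have horbit : ∀ q : Q, Nat.card (MulAction.orbit (S ≃ₐ[F] S) q.out) =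
      (MulAction.stabilizer (S ≃ₐ[F] S) q.out).index := by
    intro q
    rw [Nat.card_congr (MulAction.orbitEquivQuotientStabilizer (S ≃ₐ[F] S) q.out),
      Subgroup.index_eq_card]
  have hA : Nat.card A = ∑ q : Q, Nat.card (MulAction.orbit (S ≃ₐ[F] S) q.out) := by
    rw [Nat.card_congr (MulAction.selfEquivSigmaOrbits (S ≃ₐ[F] S) A)]
    haveI : ∀ q : Q, Fintype (MulAction.orbit (S ≃ₐ[F] S) q.out) := fun q => Fintype.ofFinite _
    simp [Nat.card_eq_fintype_card]
    convert rfl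
  rw [hA]
  apply Finset.sum_congr rfl
  intro q _
  rw [hKrank q, horbit q]
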